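/- arXiv:1004.2398 — 2 statements merged into one kernel-verified Lean document; each statement's English description precedes it below -/
import Mathlib

section
/- Let d ≥ 1 and let D ⊆ ℝ^d be a nonempty bounded convex open set. Then there exists a sequence (F_n)_{n≥1} of finite subsets of ℝ^d such that, setting D_n equal to the interior of the convex hull of F_n (an open convex polytope), the sequence (D_n) is increasing with the closure of D_n contained in D_{n+1} for every n, and ⋃_{n≥1} D_n = D. -/
open Set Metric

/-- Any compact subset of an open set `U` in a finite-dimensional normed space is contained
in the interior of the convex hull of a finite subset of `U`. -/
lemma compact_subset_interior_convexHull_finset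
    {E : Type*} [NormedAddCommGroup E] [NormedSpace ℝ E] [FiniteDimensional ℝ E]
    {K U : Set E} (hK : IsCompact K) (hU : IsOpen U) (hKU : K ⊆ U) :
    ∃ F : Finset E, ↑F ⊆ U ∧ K ⊆ interior (convexHull ℝ (F : Set E)) := by
  classical
  have hpt : ∀ x ∈ K, ∃ S : Finset E, ↑S ⊆ U ∧ x ∈ interior (convexHull ℝ (S : Set E)) := by
    intro x hx
    obtain ⟨b, hxb, hbU⟩ := exists_mem_interior_convexHull_affineBasis (hU.mem_nhds (hKU hx))
    have hfin : (Set.range b).Finite := Set.finite_range b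
    refine ⟨hfin.toFinset, ?_, ?_⟩
    · rw [hfin.coe_toFinset]
      exact (subset_convexHull ℝ _).trans hbU
    · rwa [hfin.coe_toFinset]
  choose! S hSU hSx using hpt
  have hcov : K ⊆ ⋃ x ∈ K, interior (convexHull ℝ (S x : Set E)) := fun x hx =>
    Set.mem_biUnion hx (hSx x hx)
  obtain ⟨t, htK, htfin, hcov⟩ := hK.elim_finite_subcover_image
    (fun x _ => isOpen_interior) hcov
  refine ⟨htfin.toFinset.biUnion S, ?_, ?_⟩
  · intro y hy
    simp only [Finset.coe_biUnion, Set.mem_iUnion, Finset.mem_coe] at hy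
    obtain ⟨x, hxt, hy⟩ := hy
    rw [Set.Finite.mem_toFinset] at hxt
    exact hSU x (htK hxt) hy
  · refine hcov.trans ?_
    refine Set.iUnion₂_subset fun x hxt => ?_
    refine interior_mono (convexHull_mono ?_)
    intro y hy
    simp only [Finset.coe_biUnion, Set.mem_iUnion, Finset.mem_coe]
    exact ⟨x, htfin.mem_toFinset.2 hxt, hy⟩

/-- Any nonempty bounded convex open set `D ⊆ ℝ^d` can be exhausted by an increasing
sequence of open convex polytopes: there are finite sets `F n` such that, with
`D_n = interior (convexHull (F n))`, we have `D_n ⊆ D_{n+1}`,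
`closure D_n ⊆ D_{n+1}` for all `n`, and `⋃ n, D_n = D`. -/
theorem exhaustion_by_convex_polytopes (d : ℕ) (hd : 1 ≤ d)
    (D : Set (EuclideanSpace ℝ (Fin d))) (hne : D.Nonempty)
    (hbdd : Bornology.IsBounded D) (hconv : Convex ℝ D) (hopen : IsOpen D) :
    ∃ F : ℕ → Finset (EuclideanSpace ℝ (Fin d)),
      (∀ n, interior (convexHull ℝ (↑(F n) : Set (EuclideanSpace ℝ (Fin d)))) ⊆
        interior (convexHull ℝ (↑(F (n + 1)) : Set (EuclideanSpace ℝ (Fin d))))) ∧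
      (∀ n, closure (interior (convexHull ℝ (↑(F n) : Set (EuclideanSpace ℝ (Fin d))))) ⊆
        interior (convexHull ℝ (↑(F (n + 1)) : Set (EuclideanSpace ℝ (Fin d))))) ∧
      (⋃ n, interior (convexHull ℝ (↑(F n) : Set (EuclideanSpace ℝ (Fin d))))) = D := by
  classical
  let E := EuclideanSpace ℝ (Fin d)
  -- the complement of `D` is closed and nonempty
  have hDc : IsClosed Dᶜ := hopen.isClosed_compl
  have hDcne : Dᶜ.Nonempty := by
    by_contra h
    rw [Set.not_nonempty_iff_eq_empty, Set.compl_empty_iff] at h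
    rw [h] at hbdd
    obtain ⟨x, -⟩ := hne
    obtain ⟨r, hr⟩ := hbdd.subset_closedBall x
    have : x + (r + 1) • EuclideanSpace.single ⟨0, hd⟩ (1 : ℝ) ∈ closedBall x r :=
      hr (Set.mem_univ _)
    rw [mem_closedBall, dist_eq_norm] at this
    simp only [add_sub_cancel_left, norm_smul] at this
    rw [EuclideanSpace.norm_single] at this
    have hr0 : (0 : ℝ) ≤ r := by
      have := hr (Set.mem_univ x); simpa using this
    rw [norm_one, mul_one, Real.norm_eq_abs, abs_of_nonneg (by linarith)] at this
    linarith
  -- the compact exhaustion pieces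
  set C : ℕ → Set E := fun n => closure D ∩ {x | 1 / (n + 1 : ℝ) ≤ infDist x Dᶜ} with hC
  have hCcompact : ∀ n, IsCompact (C n) := by
    intro n
    have h1 : IsCompact (closure D) := Metric.isCompact_of_isClosed_isBounded isClosed_closure hbdd.closure
    exact h1.of_isClosed_subset
      (isClosed_closure.inter (isClosed_le continuous_const (continuous_infDist_pt _)))
      Set.inter_subset_left
  have hCD : ∀ n, C n ⊆ D := by
    intro n x hx
    have h1 : 0 < infDist x Dᶜ := lt_of_lt_of_le (by positivity) hx.2
    have := (hDc.notMem_iff_infDist_pos hDcne).2 h1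
    simpa using this
  -- the recursive choice of finsets
  have key : ∀ (n : ℕ) (F : Finset E), ↑F ⊆ D →
      ∃ G : Finset E, ↑G ⊆ D ∧
        convexHull ℝ (F : Set E) ∪ C n ⊆ interior (convexHull ℝ (G : Set E)) := by
    intro n F hF
    have hcomp : IsCompact (convexHull ℝ (F : Set E) ∪ C n) :=
      (F.finite_toSet.isCompact_convexHull (𝕜 := ℝ)).union (hCcompact n)
    have hsub : convexHull ℝ (F : Set E) ∪ C n ⊆ D :=
      Set.union_subset (convexHull_min hF hconv) (hCD n)
    exact compact_subset_interior_convexHull_finset hcomp hopen hsub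
  choose! g hg1 hg2 using key
  set F : ℕ → Finset E := fun n => Nat.rec (∅ : Finset E) (fun n Fn => g n Fn) n with hF
  have hFD : ∀ n, ↑(F n) ⊆ D := by
    intro n
    induction n with
    | zero => simp [hF]
    | succ n ih => exact hg1 n (F n) ih
  have hstep : ∀ n, convexHull ℝ (F n : Set E) ∪ C n ⊆
      interior (convexHull ℝ (F (n + 1) : Set E)) := fun n => hg2 n (F n) (hFD n)
  refine ⟨F, ?_, ?_, ?_⟩
  · intro n
    exact interior_subset.trans ((Set.subset_union_left).trans (hstep n))
  · intro n
    have h1 : closure (interior (convexHull ℝ (F n : Set E))) ⊆ convexHull ℝ (F n : Set E) := by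
      have := (F n).finite_toSet.isClosed_convexHull (𝕜 := ℝ)
      calc closure (interior (convexHull ℝ (F n : Set E)))
          ⊆ closure (convexHull ℝ (F n : Set E)) := closure_mono interior_subset
        _ = convexHull ℝ (F n : Set E) := this.closure_eq
    exact h1.trans ((Set.subset_union_left).trans (hstep n))
  · apply Set.Subset.antisymm
    · refine Set.iUnion_subset fun n => ?_
      exact interior_subset.trans (convexHull_min (hFD n) hconv)
    · intro x hx
      have h1 : 0 < infDist x Dᶜ := by
        rw [← hDc.notMem_iff_infDist_pos hDcne]
        simpa using hx
      obtain ⟨n, hn⟩ := exists_nat_one_div_lt h1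
      have hxC : x ∈ C n := ⟨subset_closure hx, le_of_lt hn⟩
      exact Set.mem_iUnion.2 ⟨n + 1, hstep n (Set.mem_union_right _ hxC)⟩
end

section
/- Let D ⊆ ℝ^d be a nonempty bounded convex open set and let (D_n)_{n≥1} be an increasing sequence of nonempty convex open subsets of D with ⋃_{n≥1} D_n = D. Then the Hausdorff distance between the closure of D_n and the closure of D tends to 0 as n → ∞; in particular, sup over pairs m, n ≥ N of the Hausdorff distance between closure(D_n) and closure(D_m) tends to 0 as N → ∞. -/
open Filter

/-- If `D ⊆ ℝ^d` is nonempty, bounded, convex and open, and `(D_n)` is an increasing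
sequence of nonempty convex open subsets of `D` with `⋃ n, D_n = D`, then the
Hausdorff distance between `closure (D_n)` and `closure D` tends to `0`; in
particular the Hausdorff distances between `closure (D_n)` and `closure (D_m)` for
`m, n ≥ N` tend to `0` uniformly as `N → ∞`. -/
theorem hausdorffDist_exhaustion_tendsto_zero (d : ℕ)
    (D : Set (EuclideanSpace ℝ (Fin d))) (hne : D.Nonempty)
    (hbdd : Bornology.IsBounded D) (hconv : Convex ℝ D) (hopen : IsOpen D)
    (Dn : ℕ → Set (EuclideanSpace ℝ (Fin d)))
    (hDne : ∀ n, (Dn n).Nonempty) (hDconv : ∀ n, Convex ℝ (Dn n))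
    (hDopen : ∀ n, IsOpen (Dn n)) (hDsub : ∀ n, Dn n ⊆ D)
    (hmono : Monotone Dn) (hunion : (⋃ n, Dn n) = D) :
    Tendsto (fun n => Metric.hausdorffDist (closure (Dn n)) (closure D))
      atTop (nhds 0) ∧
    ∀ ε : ℝ, 0 < ε → ∃ N : ℕ, ∀ m n : ℕ, N ≤ m → N ≤ n →
      Metric.hausdorffDist (closure (Dn m)) (closure (Dn n)) < ε := by
  obtain ⟨x0, hx0⟩ := hDne 0
  have hx0D : x0 ∈ D := hDsub 0 hx0
  obtain ⟨r, hrD⟩ := hbdd.subset_closedBall x0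
  set r' : ℝ := max r 1 with hr'
  have hr'pos : (0:ℝ) < r' := lt_of_lt_of_le one_pos (le_max_right _ _)
  have hclD : closure D ⊆ Metric.closedBall x0 r' :=
    closure_minimal (hrD.trans (Metric.closedBall_subset_closedBall (le_max_left _ _)))
      Metric.isClosed_closedBall
  -- key estimate
  have key : ∀ ε : ℝ, 0 < ε → ∃ N : ℕ, ∀ n, N ≤ n →
      Metric.hausdorffDist (closure (Dn n)) (closure D) ≤ ε / 2 := by
    intro ε hε
    set t : ℝ := min (ε / (2 * r')) (1/2) with ht
    have htpos : 0 < t := lt_min (by positivity) (by norm_num)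
    have ht1 : t < 1 := lt_of_le_of_lt (min_le_right _ _) (by norm_num)
    have hcomb : ∀ y ∈ closure D, (t • x0 + (1 - t) • y) ∈ D := by
      intro y hy
      have := hconv.combo_interior_closure_mem_interior (a := t) (b := 1 - t)
        (by rwa [hopen.interior_eq]) hy htpos (by linarith) (by ring)
      rwa [hopen.interior_eq] at this
    -- compact image
    set h : EuclideanSpace ℝ (Fin d) → EuclideanSpace ℝ (Fin d) :=
      fun y => t • x0 + (1 - t) • y with hh
    have hcont : Continuous h := continuous_const.add (continuous_id.const_smul (1 - t))
    have hKcomp : IsCompact (h '' closure D) :=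
      (hbdd.isCompact_closure).image hcont
    have hKsub : h '' closure D ⊆ ⋃ n, Dn n := by
      rw [hunion]
      rintro _ ⟨y, hy, rfl⟩
      exact hcomb y hy
    obtain ⟨s, hs⟩ := hKcomp.elim_finite_subcover Dn hDopen hKsub
    refine ⟨s.sup id, fun n hn => ?_⟩
    have hKDn : h '' closure D ⊆ Dn n := by
      intro x hx
      obtain ⟨i, hi, hxi⟩ := Set.mem_iUnion₂.1 (hs hx)
      exact hmono ((Finset.le_sup (f := id) hi).trans hn) hxi
    apply Metric.hausdorffDist_le_of_mem_dist (by positivity)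
    · intro x hx
      exact ⟨x, closure_mono (hDsub n) hx, by rw [dist_self]; positivity⟩
    · intro y hy
      refine ⟨h y, subset_closure (hKDn ⟨y, hy, rfl⟩), ?_⟩
      have : dist y (h y) = t * dist y x0 := by
        rw [hh]
        simp only [dist_eq_norm]
        have : y - (t • x0 + (1 - t) • y) = t • (y - x0) := by
          module
        rw [this, norm_smul, Real.norm_of_nonneg htpos.le]
      rw [this]
      have hd : dist y x0 ≤ r' := hclD hy
      calc t * dist y x0 ≤ (ε / (2 * r')) * r' := by
            apply mul_le_mul (min_le_left _ _) hd dist_nonneg (by positivity)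
        _ = ε / 2 := by field_simp
  have hεd : ∀ n, EMetric.hausdorffEdist (closure (Dn n)) (closure D) ≠ ⊤ := by
    intro n
    exact Metric.hausdorffEdist_ne_top_of_nonempty_of_bounded
      ((hDne n).closure) hne.closure
      ((hbdd.subset (hDsub n)).closure) hbdd.closure
  constructor
  · rw [Metric.tendsto_atTop]
    intro ε hε
    obtain ⟨N, hN⟩ := key ε hε
    refine ⟨N, fun n hn => ?_⟩
    rw [Real.dist_eq, abs_of_nonneg (by simpa using Metric.hausdorffDist_nonneg)]
    simpa using lt_of_le_of_lt (hN n hn) (by linarith)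
  · intro ε hε
    obtain ⟨N, hN⟩ := key (ε / 2) (by linarith)
    refine ⟨N, fun m n hm hn => ?_⟩
    have hcm : Metric.hausdorffDist (closure D) (closure (Dn n)) =
        Metric.hausdorffDist (closure (Dn n)) (closure D) :=
      Metric.hausdorffDist_comm
    calc Metric.hausdorffDist (closure (Dn m)) (closure (Dn n))
        ≤ Metric.hausdorffDist (closure (Dn m)) (closure D) +
          Metric.hausdorffDist (closure D) (closure (Dn n)) :=
          Metric.hausdorffDist_triangle (hεd m)
      _ ≤ ε / 2 / 2 + ε / 2 / 2 := by
          rw [hcm]; exact add_le_add (hN m hm) (hN n hn)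
      _ < ε := by linarith
end
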